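/- The function u ↦ (e^u − u − 1)/u² is monotone increasing on ℝ (extended by the value 1/2 at u = 0). -/

import Mathlib

open intervalIntegral in
lemma phi_eq_integral (u : ℝ) :
    (if u = 0 then (1 : ℝ) / 2 else (Real.exp u - u - 1) / u ^ 2)
      = ∫ t in (0:ℝ)..1, (1 - t) * Real.exp (t * u) := by
  by_cases hu : u = 0
  · subst hu
    simp [intervalIntegral.integral_sub intervalIntegrable_const
      (intervalIntegral.intervalIntegrable_id)]
    norm_num
  · rw [if_neg hu]
    have key : ∀ t ∈ Set.uIcc (0:ℝ) 1,
        HasDerivAt (fun t : ℝ => Real.exp (t * u) * ((1/u + 1/u^2) - t/u))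
          ((1 - t) * Real.exp (t * u)) t := by
      intro t _
      have h1 : HasDerivAt (fun t : ℝ => Real.exp (t * u)) (Real.exp (t * u) * u) t := by
        have := (Real.hasDerivAt_exp (t * u)).comp t ((hasDerivAt_id t).mul_const u)
        simpa [Function.comp_def] using this
      have h2 : HasDerivAt (fun t : ℝ => ((1/u + 1/u^2) - t/u)) (-(1/u)) t := by
        exact ((hasDerivAt_id t).div_const u).const_sub (1/u + 1/u^2)
      have := h1.mul h2
      refine HasDerivAt.congr_deriv this ?_
      field_simp
      ring
    have hcont : Continuous fun t : ℝ => (1 - t) * Real.exp (t * u) := by continuity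
    rw [intervalIntegral.integral_eq_sub_of_hasDerivAt key (hcont.intervalIntegrable _ _)]
    simp only [zero_mul, Real.exp_zero, one_mul]
    field_simp
    ring

theorem monotone_phi_div_sq :
    Monotone (fun u : ℝ => if u = 0 then (1 : ℝ) / 2 else (Real.exp u - u - 1) / u ^ 2) := by
  intro a b hab
  simp only
  rw [phi_eq_integral a, phi_eq_integral b]
  apply intervalIntegral.integral_mono_on (by norm_num : (0:ℝ) ≤ 1)
  · exact (by continuity : Continuous fun t : ℝ => (1 - t) * Real.exp (t * a)).intervalIntegrable _ _
  · exact (by continuity : Continuous fun t : ℝ => (1 - t) * Real.exp (t * b)).intervalIntegrable _ _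
  · intro t ht
    rcases ht with ⟨ht0, ht1⟩
    have h1 : (0:ℝ) ≤ 1 - t := by linarith
    have h2 : Real.exp (t * a) ≤ Real.exp (t * b) :=
      Real.exp_le_exp.2 (mul_le_mul_of_nonneg_left hab ht0)
    exact mul_le_mul_of_nonneg_left h2 h1
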